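/- Let (X,d) be a metric space and (u_j)_{j∈J}, (v_j)_{j∈J} families of normal compactly supported fuzzy sets on X such that there is a compact K ⊆ X containing supp u_j and supp v_j for all j, and both pointwise suprema ∨_j u_j and ∨_j v_j are attained pointwise as maxima. Then d_∞(∨_j u_j, ∨_j v_j) ≤ sup_j d_∞(u_j, v_j), where d_∞(u,v) = sup_{α∈(0,1]} h([u]^α, [v]^α). -/

import Mathlib

open Metric Filter Topology Set

/-- The orbit of a point `x` under the family of maps `f i`:
`x` together with all images of `x` under finite compositions of the `f i`. -/
def orbitIFS {X I : Type*} (f : I → X → X) (x : X) : Set X :=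
  ⋃ l : List I, {l.foldr (fun i y => f i y) x}

/-- The fractal (Hutchinson–Barnsley) operator `K ↦ ⋃ i, f i '' K`. -/
def fractalOp {X I : Type*} (f : I → X → X) (K : Set X) : Set X :=
  ⋃ i, f i '' K

/-- Image of a fuzzy set under a map: `f(u)(y) = sup_{x ∈ f⁻¹ y} u x` (0 if empty). -/
noncomputable def fuzzyImage {X : Type*} (g : X → X) (u : X → ℝ) : X → ℝ :=
  fun y => sSup (u '' (g ⁻¹' {y}))

/-- The fuzzy Hutchinson–Barnsley operator `Z(u) = ∨ i, ρ i (f i (u))`. -/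
noncomputable def Zop {X I : Type*} (f : I → X → X) (ρ : I → ℝ → ℝ) (u : X → ℝ) : X → ℝ :=
  fun y => ⨆ i, ρ i (fuzzyImage (f i) u y)

/-- The metric `d_∞(u,v) = sup_{α ∈ (0,1]} h([u]^α, [v]^α)`. -/
noncomputable def dInfty {X : Type*} [MetricSpace X] (u v : X → ℝ) : ℝ :=
  ⨆ α : Ioc (0:ℝ) 1, hausdorffDist {x | (α:ℝ) ≤ u x} {x | (α:ℝ) ≤ v x}

/-- The support of a fuzzy set: the closure of `{x | 0 < u x}`. -/
def fsupp {X : Type*} [MetricSpace X] (u : X → ℝ) : Set X := closure {x | 0 < u x}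

/-- The crisp fuzzy point `δ_s`. -/
def fdelta {X : Type*} [DecidableEq X] (s : X) : X → ℝ := fun t => if t = s then 1 else 0

/-- `u^x` : the restriction of `u` to the closure of the orbit of `w` (zero outside). -/
noncomputable def restrictO {X I : Type*} [MetricSpace X] (f : I → X → X) (u : X → ℝ)
    (w : X) : X → ℝ :=
  (closure (orbitIFS f w)).indicator u

/-- A normal compactly supported fuzzy set (with values in `[0,1]`). -/
def IsFuzzyN {X : Type*} [MetricSpace X] (u : X → ℝ) : Prop :=
  (∀ x, u x ∈ Icc (0:ℝ) 1) ∧ (∃ x, u x = 1) ∧ IsCompact (fsupp u)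

/-- An upper semicontinuous normal compactly supported fuzzy set: membership in `F*_X`. -/
def IsFuzzyStar {X : Type*} [MetricSpace X] (u : X → ℝ) : Prop :=
  IsFuzzyN u ∧ UpperSemicontinuous u

/-- Membership in `F*_S`: for each point of positive membership there is an orbit
containing it together with a point of membership one. -/
def InFS {X I : Type*} [MetricSpace X] (f : I → X → X) (u : X → ℝ) : Prop :=
  IsFuzzyStar u ∧ ∀ x, 0 < u x → ∃ w y, x ∈ orbitIFS f w ∧ y ∈ orbitIFS f w ∧ u y = 1

/-- The orbital contraction condition. -/
def OrbitalContr {X I : Type*} [MetricSpace X] (f : I → X → X) (C : ℝ) : Prop :=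
  ∀ i x, ∀ y ∈ orbitIFS f x, ∀ z ∈ orbitIFS f x, dist (f i y) (f i z) ≤ C * dist y z

/-- An admissible system of grey level maps. -/
def Admissible {I : Type*} (ρ : I → ℝ → ℝ) : Prop :=
  (∀ i, ρ i 0 = 0) ∧ (∀ i, MonotoneOn (ρ i) (Icc (0:ℝ) 1)) ∧
  (∀ i, ∀ t ∈ Icc (0:ℝ) 1, ContinuousWithinAt (ρ i) (Ici t) t) ∧
  (∀ i, ∀ t ∈ Icc (0:ℝ) 1, ρ i t ∈ Icc (0:ℝ) 1) ∧ (∃ j, ρ j 1 = 1)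

/-- `d_∞(∨ u_j, ∨ v_j) ≤ sup_j d_∞(u_j, v_j)`. -/
theorem stmt5 {X J : Type*} [MetricSpace X] [Nonempty J]
    (u v : J → X → ℝ) (hu : ∀ j, IsFuzzyN (u j)) (hv : ∀ j, IsFuzzyN (v j))
    (K : Set X) (hKcp : IsCompact K)
    (hKu : ∀ j, fsupp (u j) ⊆ K) (hKv : ∀ j, fsupp (v j) ⊆ K)
    (humax : ∀ y, ∃ j, u j y = ⨆ j', u j' y)
    (hvmax : ∀ y, ∃ j, v j y = ⨆ j', v j' y) :
    dInfty (fun y => ⨆ j, u j y) (fun y => ⨆ j, v j y) ≤ ⨆ j, dInfty (u j) (v j) := by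
  classical
  set R := ⨆ j, dInfty (u j) (v j) with hR
  set D := Metric.diam K with hD
  have hsubU : ∀ j (α : ℝ), 0 < α → {x | α ≤ u j x} ⊆ K := fun j α hα x hx =>
    hKu j (subset_closure (lt_of_lt_of_le hα hx))
  have hsubV : ∀ j (α : ℝ), 0 < α → {x | α ≤ v j x} ⊆ K := fun j α hα x hx =>
    hKv j (subset_closure (lt_of_lt_of_le hα hx))
  have hneU : ∀ j (α : ℝ), α ≤ 1 → ({x | α ≤ u j x}).Nonempty := by
    intro j α hα
    obtain ⟨x, hx⟩ := (hu j).2.1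
    exact ⟨x, by simp [hx, hα]⟩
  have hneV : ∀ j (α : ℝ), α ≤ 1 → ({x | α ≤ v j x}).Nonempty := by
    intro j α hα
    obtain ⟨x, hx⟩ := (hv j).2.1
    exact ⟨x, by simp [hx, hα]⟩
  have hKb : Bornology.IsBounded K := hKcp.isBounded
  -- each level-set Hausdorff distance is bounded by diam K
  have hDb : ∀ j (α : ℝ), α ∈ Ioc (0:ℝ) 1 →
      hausdorffDist {x | α ≤ u j x} {x | α ≤ v j x} ≤ D := by
    intro j α hα
    refine le_trans (hausdorffDist_le_diam (hneU j α hα.2) (hKb.subset (hsubU j α hα.1))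
      (hneV j α hα.2) (hKb.subset (hsubV j α hα.1))) ?_
    exact Metric.diam_mono (union_subset (hsubU j α hα.1) (hsubV j α hα.1)) hKb
  have hdle : ∀ j, dInfty (u j) (v j) ≤ D := by
    intro j
    exact ciSup_le fun ⟨α, hα⟩ => hDb j α hα
  have hRbdd : BddAbove (Set.range fun j => dInfty (u j) (v j)) :=
    ⟨D, by rintro _ ⟨j, rfl⟩; exact hdle j⟩
  have hdnn : ∀ j, 0 ≤ dInfty (u j) (v j) := fun j =>
    Real.iSup_nonneg fun _ => hausdorffDist_nonneg
  have hRnn : 0 ≤ R := le_trans (hdnn (Classical.arbitrary J))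
    (le_ciSup hRbdd (Classical.arbitrary J))
  have hdR : ∀ j, dInfty (u j) (v j) ≤ R := fun j => le_ciSup hRbdd j
  -- pointwise sup facts
  have hbddu : ∀ x, BddAbove (Set.range fun j => u j x) := fun x =>
    ⟨1, by rintro _ ⟨j, rfl⟩; exact ((hu j).1 x).2⟩
  have hbddv : ∀ x, BddAbove (Set.range fun j => v j x) := fun x =>
    ⟨1, by rintro _ ⟨j, rfl⟩; exact ((hv j).1 x).2⟩
  have hmemU : ∀ (α : ℝ) x, α ≤ (⨆ j, u j x) ↔ ∃ j, α ≤ u j x := by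
    intro α x
    constructor
    · intro h
      obtain ⟨j, hj⟩ := humax x
      exact ⟨j, hj ▸ h⟩
    · rintro ⟨j, hj⟩
      exact le_trans hj (le_ciSup (hbddu x) j)
  have hmemV : ∀ (α : ℝ) x, α ≤ (⨆ j, v j x) ↔ ∃ j, α ≤ v j x := by
    intro α x
    constructor
    · intro h
      obtain ⟨j, hj⟩ := hvmax x
      exact ⟨j, hj ▸ h⟩
    · rintro ⟨j, hj⟩
      exact le_trans hj (le_ciSup (hbddv x) j)
  refine ciSup_le ?_
  rintro ⟨α, hα⟩
  -- the edist bound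
  have hE : EMetric.hausdorffEdist {x | (α:ℝ) ≤ ⨆ j, u j x} {x | (α:ℝ) ≤ ⨆ j, v j x}
      ≤ ENNReal.ofReal R := by
    apply EMetric.hausdorffEdist_le_of_infEdist
    · intro x hx
      obtain ⟨j, hj⟩ := (hmemU α x).1 hx
      calc EMetric.infEdist x {x | (α:ℝ) ≤ ⨆ j, v j x}
          ≤ EMetric.infEdist x {y | (α:ℝ) ≤ v j y} :=
            EMetric.infEdist_anti (fun y hy => (hmemV α y).2 ⟨j, hy⟩)
        _ ≤ Metric.hausdorffEDist {y | (α:ℝ) ≤ u j y} {y | (α:ℝ) ≤ v j y} :=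
            EMetric.infEdist_le_hausdorffEdist_of_mem hj
        _ = ENNReal.ofReal (hausdorffDist {y | (α:ℝ) ≤ u j y} {y | (α:ℝ) ≤ v j y}) := by
            rw [hausdorffDist, ENNReal.ofReal_toReal
              (Metric.hausdorffEdist_ne_top_of_nonempty_of_bounded (hneU j α hα.2)
                (hneV j α hα.2) (hKb.subset (hsubU j α hα.1)) (hKb.subset (hsubV j α hα.1)))]
        _ ≤ ENNReal.ofReal R := ENNReal.ofReal_le_ofReal (le_trans
            (le_ciSup (f := fun β : Ioc (0:ℝ) 1 =>
              hausdorffDist {y | (β:ℝ) ≤ u j y} {y | (β:ℝ) ≤ v j y})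
              ⟨D, by rintro _ ⟨⟨β, hβ⟩, rfl⟩; exact hDb j β hβ⟩ ⟨α, hα⟩) (hdR j))
    · intro x hx
      obtain ⟨j, hj⟩ := (hmemV α x).1 hx
      calc EMetric.infEdist x {x | (α:ℝ) ≤ ⨆ j, u j x}
          ≤ EMetric.infEdist x {y | (α:ℝ) ≤ u j y} :=
            EMetric.infEdist_anti (fun y hy => (hmemU α y).2 ⟨j, hy⟩)
        _ ≤ Metric.hausdorffEDist {y | (α:ℝ) ≤ v j y} {y | (α:ℝ) ≤ u j y} :=
            EMetric.infEdist_le_hausdorffEdist_of_mem hj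
        _ = ENNReal.ofReal (hausdorffDist {y | (α:ℝ) ≤ u j y} {y | (α:ℝ) ≤ v j y}) := by
            rw [EMetric.hausdorffEdist_comm, hausdorffDist, ENNReal.ofReal_toReal
              (Metric.hausdorffEdist_ne_top_of_nonempty_of_bounded (hneU j α hα.2)
                (hneV j α hα.2) (hKb.subset (hsubU j α hα.1)) (hKb.subset (hsubV j α hα.1)))]
        _ ≤ ENNReal.ofReal R := ENNReal.ofReal_le_ofReal (le_trans
            (le_ciSup (f := fun β : Ioc (0:ℝ) 1 =>
              hausdorffDist {y | (β:ℝ) ≤ u j y} {y | (β:ℝ) ≤ v j y})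
              ⟨D, by rintro _ ⟨⟨β, hβ⟩, rfl⟩; exact hDb j β hβ⟩ ⟨α, hα⟩) (hdR j))
  exact ENNReal.toReal_le_of_le_ofReal hRnn hE
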